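/- There is no block-symmetric polymorphism of (1in3, Č+) of arity 47 with two blocks of sizes 23 and 24. -/

import Mathlib

/-- `f` is a polymorphism of `(1in3, B)` where `B` has relation `R`:
for every partition of `[n]` into three pairwise disjoint blocks `X, Y, Z`,
the triple of values is in `R`. -/
def IsPolymorphism {n : ℕ} {B : Type*} (R : B → B → B → Prop) (f : Finset (Fin n) → B) : Prop :=
  ∀ X Y Z : Finset (Fin n), Disjoint X Y → Disjoint X Z → Disjoint Y Z →
    X ∪ Y ∪ Z = Finset.univ → R (f X) (f Y) (f Z)

/-- The relation of `Č`: all coordinate permutations of (0,0,1), (1,1,2), (2,2,3), (3,3,0). -/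
def relC (a b c : Fin 4) : Prop :=
  ({a, b, c} : Multiset (Fin 4)) = {0, 0, 1} ∨ ({a, b, c} : Multiset (Fin 4)) = {1, 1, 2} ∨
    ({a, b, c} : Multiset (Fin 4)) = {2, 2, 3} ∨ ({a, b, c} : Multiset (Fin 4)) = {3, 3, 0}


/-- The relation of `Č+`: the relation of `Č` together with all rainbow tuples. -/
def relCp (a b c : Fin 4) : Prop :=
  relC a b c ∨ (a ≠ b ∧ a ≠ c ∧ b ≠ c)

/-- Boolean version of `relCp`. -/
def allowedB (x y z : Fin 4) : Bool :=
  if x = y then (if y = z then false else z = y + 1)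
  else if x = z then decide (y = x + 1)
  else if y = z then decide (x = y + 1)
  else true

lemma relCp_iff : ∀ x y z : Fin 4, relCp x y z ↔ allowedB x y z = true := by unfold relCp relC; decide

lemma force1 : ∀ x z : Fin 4, allowedB x x z = true → z = x + 1 := by decide

lemma force2 : ∀ x y : Fin 4, allowedB x y y = true → x = y + 1 := by decide

lemma key2 : ∀ t x3 x6 x12 : Fin 4,
    allowedB (t+1) (t+1+1) x12 = true →
    allowedB x3 (t+1) t = true →
    allowedB x3 t x12 = true →
    allowedB (t+1+1+1) x6 x12 = true →
    allowedB x6 t (t+1+1) = true →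
    False := by decide

lemma key : ∀ x2 x3 x5 x6 x7 x8 x9 x12 x13 : Fin 4,
    allowedB x2 x8 x13 = true → allowedB x2 x9 x12 = true → allowedB x3 x7 x13 = true →
    allowedB x3 x8 x12 = true → allowedB x5 x5 x13 = true → allowedB x5 x6 x12 = true →
    allowedB x5 x9 x9 = true → allowedB x6 x8 x9 = true → allowedB x7 x7 x9 = true →
    allowedB x7 x8 x8 = true → False := by
  intro x2 x3 x5 x6 x7 x8 x9 x12 x13 h1 h2 h3 h4 h5 h6 h7 h8 h9 h10
  have e7 : x7 = x8 + 1 := force2 _ _ h10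
  have e9 : x9 = x8 + 1 + 1 := by rw [force1 _ _ h9, e7]
  have e5 : x5 = x8 + 1 + 1 + 1 := by rw [force2 _ _ h7, e9]
  have e13 : x13 = x8 := by
    rw [force1 _ _ h5, e5]
    exact (by decide : ∀ a : Fin 4, a + 1 + 1 + 1 + 1 = a) x8
  have e2 : x2 = x8 + 1 := force2 _ _ (by rwa [e13] at h1)
  exact key2 x8 x3 x6 x12 (by rw [← e9, ← e2]; exact h2)
    (by rw [← e7, ← e13]; exact h3) h4 (by rw [← e5]; exact h6)
    (by rw [← e9]; exact h8)

theorem stmt_19 :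
    ¬ ∃ g : Finset (Fin 47) → Fin 4, IsPolymorphism relCp g ∧
      ∃ X23 X24 : Finset (Fin 47), Disjoint X23 X24 ∧ X23 ∪ X24 = Finset.univ ∧
        X23.card = 23 ∧ X24.card = 24 ∧
        ∀ X Y : Finset (Fin 47), (X ∩ X23).card = (Y ∩ X23).card →
          (X ∩ X24).card = (Y ∩ X24).card → g X = g Y := by
  rintro ⟨g, hpoly, X23, X24, hd, hu, h23, h24, hsym⟩
  -- choose a fixed 8-element subset of X24
  obtain ⟨Q8, hQ8sub, hQ8card⟩ := Finset.exists_subset_card_eq (s := X24) (n := 8) (by rw [h24]; omega)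
  -- choose, for each a, a subset of X23 of size min a 23
  have hT : ∀ a : ℕ, ∃ t, t ⊆ X23 ∧ t.card = min a 23 := fun a =>
    Finset.exists_subset_card_eq (s := X23) (n := min a 23) (by rw [h23]; omega)
  choose T hTsub hTcard using hT
  -- intersections of a union of a part of X23 and a part of X24
  have hPQ : ∀ P Q : Finset (Fin 47), P ⊆ X23 → Q ⊆ X24 →
      (P ∪ Q) ∩ X23 = P ∧ (P ∪ Q) ∩ X24 = Q := by
    intro P Q hP hQ
    constructor
    · ext x
      simp only [Finset.mem_inter, Finset.mem_union]
      constructor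
      · rintro ⟨hx | hx, hx23⟩
        · exact hx
        · exact absurd hx23 (Finset.disjoint_right.mp hd (hQ hx))
      · intro hx; exact ⟨Or.inl hx, hP hx⟩
    · ext x
      simp only [Finset.mem_inter, Finset.mem_union]
      constructor
      · rintro ⟨hx | hx, hx24⟩
        · exact absurd hx24 (Finset.disjoint_left.mp hd (hP hx))
        · exact hx
      · intro hx; exact ⟨Or.inr hx, hQ hx⟩
  have hcross : ∀ {P Q : Finset (Fin 47)}, P ⊆ X23 → Q ⊆ X24 → Disjoint P Q :=
    fun hP hQ => Finset.disjoint_left.mpr fun x hx hx' =>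
      Finset.disjoint_left.mp hd (hP hx) (hQ hx')
  -- the main constraint
  have main : ∀ a1 a2 a3 : ℕ, a1 + a2 + a3 = 23 →
      allowedB (g (T a1 ∪ Q8)) (g (T a2 ∪ Q8)) (g (T a3 ∪ Q8)) = true := by
    intro a1 a2 a3 hsum
    have ha1 : a1 ≤ 23 := by omega
    have hc1 : (T a1).card = a1 := by rw [hTcard]; omega
    have hc2 : (T a2).card = a2 := by rw [hTcard]; omega
    have hc3 : (T a3).card = a3 := by rw [hTcard]; omega
    set P1 := T a1 with hP1def
    have hP1sub : P1 ⊆ X23 := hTsub a1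
    obtain ⟨P2, hP2sub, hP2card⟩ := Finset.exists_subset_card_eq (s := X23 \ P1) (n := a2)
      (by rw [Finset.card_sdiff_of_subset hP1sub, h23, hc1]; omega)
    obtain ⟨Q2, hQ2sub, hQ2card⟩ := Finset.exists_subset_card_eq (s := X24 \ Q8) (n := 8)
      (by rw [Finset.card_sdiff_of_subset hQ8sub, h24, hQ8card]; omega)
    set P3 := X23 \ (P1 ∪ P2) with hP3def
    set Q3 := X24 \ (Q8 ∪ Q2) with hQ3def
    have hP2X : P2 ⊆ X23 := hP2sub.trans (Finset.sdiff_subset)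
    have hQ2X : Q2 ⊆ X24 := hQ2sub.trans (Finset.sdiff_subset)
    have hP3X : P3 ⊆ X23 := Finset.sdiff_subset
    have hQ3X : Q3 ⊆ X24 := Finset.sdiff_subset
    have hP12 : Disjoint P1 P2 := Finset.disjoint_left.mpr fun x hx1 hx2 =>
      (Finset.mem_sdiff.mp (hP2sub hx2)).2 hx1
    have hQ12 : Disjoint Q8 Q2 := Finset.disjoint_left.mpr fun x hx1 hx2 =>
      (Finset.mem_sdiff.mp (hQ2sub hx2)).2 hx1
    have hP13 : Disjoint P1 P3 := Finset.disjoint_left.mpr fun x hx1 hx3 =>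
      (Finset.mem_sdiff.mp hx3).2 (Finset.mem_union_left _ hx1)
    have hP23 : Disjoint P2 P3 := Finset.disjoint_left.mpr fun x hx2 hx3 =>
      (Finset.mem_sdiff.mp hx3).2 (Finset.mem_union_right _ hx2)
    have hQ13 : Disjoint Q8 Q3 := Finset.disjoint_left.mpr fun x hx1 hx3 =>
      (Finset.mem_sdiff.mp hx3).2 (Finset.mem_union_left _ hx1)
    have hQ23 : Disjoint Q2 Q3 := Finset.disjoint_left.mpr fun x hx2 hx3 =>
      (Finset.mem_sdiff.mp hx3).2 (Finset.mem_union_right _ hx2)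
    have hP12sub : P1 ∪ P2 ⊆ X23 := Finset.union_subset hP1sub hP2X
    have hQ12sub : Q8 ∪ Q2 ⊆ X24 := Finset.union_subset hQ8sub hQ2X
    have hP3card : P3.card = a3 := by
      rw [hP3def, Finset.card_sdiff_of_subset hP12sub, Finset.card_union_of_disjoint hP12,
        h23, hc1, hP2card]
      omega
    have hQ3card : Q3.card = 8 := by
      rw [hQ3def, Finset.card_sdiff_of_subset hQ12sub, Finset.card_union_of_disjoint hQ12,
        h24, hQ8card, hQ2card]
    -- the three blocks
    have hdXY : Disjoint (P1 ∪ Q8) (P2 ∪ Q2) := by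
      simp only [Finset.disjoint_union_left, Finset.disjoint_union_right]
      exact ⟨⟨hP12, (hcross hP2X hQ8sub).symm⟩, ⟨hcross hP1sub hQ2X, hQ12⟩⟩
    have hdXZ : Disjoint (P1 ∪ Q8) (P3 ∪ Q3) := by
      simp only [Finset.disjoint_union_left, Finset.disjoint_union_right]
      exact ⟨⟨hP13, (hcross hP3X hQ8sub).symm⟩, ⟨hcross hP1sub hQ3X, hQ13⟩⟩
    have hdYZ : Disjoint (P2 ∪ Q2) (P3 ∪ Q3) := by
      simp only [Finset.disjoint_union_left, Finset.disjoint_union_right]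
      exact ⟨⟨hP23, (hcross hP3X hQ2X).symm⟩, ⟨hcross hP2X hQ3X, hQ23⟩⟩
    have hUniv : (P1 ∪ Q8) ∪ (P2 ∪ Q2) ∪ (P3 ∪ Q3) = Finset.univ := by
      apply Finset.eq_univ_iff_forall.mpr
      intro x
      have hx : x ∈ X23 ∪ X24 := by rw [hu]; exact Finset.mem_univ x
      simp only [Finset.mem_union] at hx ⊢
      rcases hx with h | h
      · have : x ∈ P1 ∨ x ∈ P2 ∨ x ∈ P3 := by
          by_cases h1 : x ∈ P1
          · exact Or.inl h1
          by_cases h2 : x ∈ P2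
          · exact Or.inr (Or.inl h2)
          · exact Or.inr (Or.inr (Finset.mem_sdiff.mpr
              ⟨h, by simp [Finset.mem_union, h1, h2]⟩))
        tauto
      · have : x ∈ Q8 ∨ x ∈ Q2 ∨ x ∈ Q3 := by
          by_cases h1 : x ∈ Q8
          · exact Or.inl h1
          by_cases h2 : x ∈ Q2
          · exact Or.inr (Or.inl h2)
          · exact Or.inr (Or.inr (Finset.mem_sdiff.mpr
              ⟨h, by simp [Finset.mem_union, h1, h2]⟩))
        tauto
    have hrel := hpoly (P1 ∪ Q8) (P2 ∪ Q2) (P3 ∪ Q3) hdXY hdXZ hdYZ hUniv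
    have hgY : g (P2 ∪ Q2) = g (T a2 ∪ Q8) := by
      apply hsym
      · rw [(hPQ _ _ hP2X hQ2X).1, (hPQ _ _ (hTsub a2) hQ8sub).1, hP2card, hc2]
      · rw [(hPQ _ _ hP2X hQ2X).2, (hPQ _ _ (hTsub a2) hQ8sub).2, hQ2card, hQ8card]
    have hgZ : g (P3 ∪ Q3) = g (T a3 ∪ Q8) := by
      apply hsym
      · rw [(hPQ _ _ hP3X hQ3X).1, (hPQ _ _ (hTsub a3) hQ8sub).1, hP3card, hc3]
      · rw [(hPQ _ _ hP3X hQ3X).2, (hPQ _ _ (hTsub a3) hQ8sub).2, hQ3card, hQ8card]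
    rw [hgY, hgZ] at hrel
    exact (relCp_iff _ _ _).mp hrel
  exact key _ _ _ _ _ _ _ _ _
    (main 2 8 13 rfl) (main 2 9 12 rfl) (main 3 7 13 rfl) (main 3 8 12 rfl)
    (main 5 5 13 rfl) (main 5 6 12 rfl) (main 5 9 9 rfl) (main 6 8 9 rfl)
    (main 7 7 9 rfl) (main 7 8 8 rfl)
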